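/- Let W : ℝ^n → ℝ^m be a linear map and let x_in : ℕ → ℝ^n, x_out : ℕ → ℝ^m, m : ℕ → ℝ^m, v : ℕ → ℝ^m be sequences satisfying, for every integer t ≥ 1, the neuron dynamics m(t) = v(t−1) + W(x_in(t)) and v(t) = m(t) − x_out(t). Then for every integer T ≥ 1, (1/T) • ∑_{t=1}^{T} x_out(t) = W((1/T) • ∑_{t=1}^{T} x_in(t)) − (1/T) • (v(T) − v(0)). -/

import Mathlib

/-- Average postsynaptic potential of a soft-reset IF neuron over the first `T`
time steps equals the linear layer applied to the average input, minus the
residual membrane-potential term `(v(T) - v(0))/T`. -/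
theorem soft_reset_average_output
    {n m : ℕ} (W : (Fin n → ℝ) →ₗ[ℝ] (Fin m → ℝ))
    (x_in : ℕ → Fin n → ℝ) (x_out mem v : ℕ → Fin m → ℝ)
    (hmem : ∀ t : ℕ, 1 ≤ t → mem t = v (t - 1) + W (x_in t))
    (hv : ∀ t : ℕ, 1 ≤ t → v t = mem t - x_out t) :
    ∀ T : ℕ, 1 ≤ T →
      (1 / (T : ℝ)) • ∑ t ∈ Finset.Icc 1 T, x_out t
        = W ((1 / (T : ℝ)) • ∑ t ∈ Finset.Icc 1 T, x_in t)
          - (1 / (T : ℝ)) • (v T - v 0) := by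
  have key : ∀ T : ℕ, 1 ≤ T →
      ∑ t ∈ Finset.Icc 1 T, x_out t
        = W (∑ t ∈ Finset.Icc 1 T, x_in t) - (v T - v 0) := by
    intro T hT
    induction T with
    | zero => omega
    | succ T ih =>
      have hout : x_out (T + 1) = v T + W (x_in (T + 1)) - v (T + 1) := by
        have h1 := hmem (T + 1) (by omega)
        have h2 := hv (T + 1) (by omega)
        simp only [Nat.add_sub_cancel] at h1
        rw [h1] at h2
        rw [h2]; abel
      rcases Nat.eq_or_lt_of_le hT with h | h
      · obtain rfl : T = 0 := by omega
        simp only [Finset.Icc_self, Finset.sum_singleton, hout]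
        abel
      · have hT' : 1 ≤ T := by omega
        rw [Finset.sum_Icc_succ_top (by omega), Finset.sum_Icc_succ_top (by omega),
          ih hT', map_add, hout]
        abel
  intro T hT
  rw [key T hT, map_smul, smul_sub]
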